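/- Let $R = \bigoplus_{s=0}^N R^s$ be a graded Artinian Gorenstein $\mathbb{C}$-algebra with socle in degree $N$, fix $e \geq 1$ with $2e \leq N$, and suppose that for every $\eta \in R^{N-2e}$ the multiplication map $\cdot\eta \colon R^e \to R^{N-e}$ fails to be injective. Then the set $Y = \{\alpha \in R^e : \alpha^2 = 0\}$ contains, for each $\eta \in R^{N-2e}$ of maximal rank, every element of $\ker(\cdot\eta \colon R^e \to R^{N-e})$; in particular $Y \neq \{0\}$. -/

import Mathlib

open Module

open Polynomial

lemma matlem (r : ℕ) (A C : Matrix (Fin (r+1)) (Fin (r+1)) ℂ)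
    (hArow : ∀ j, A (Fin.last r) j = 0) (hAcol : ∀ i, A i (Fin.last r) = 0)
    (hA : (A.submatrix Fin.castSucc Fin.castSucc).det ≠ 0)
    (hC : C (Fin.last r) (Fin.last r) ≠ 0)
    (h : ∀ t : ℂ, (A + t • C).det = 0) : False := by
  classical
  let P : Matrix (Fin (r+1)) (Fin (r+1)) ℂ[X] :=
    fun i j => Polynomial.C (A i j) + X * Polynomial.C (C i j)
  have hPapply : ∀ i j, P i j = Polynomial.C (A i j) + X * Polynomial.C (C i j) := fun _ _ => rfl
  have heval : ∀ t : ℂ, (Polynomial.evalRingHom t).mapMatrix P = A + t • C := by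
    intro t
    ext i j
    simp only [RingHom.mapMatrix_apply, Matrix.map_apply, Matrix.add_apply, Matrix.smul_apply,
      smul_eq_mul, hPapply, coe_evalRingHom]
    rw [Polynomial.eval_add, Polynomial.eval_C, Polynomial.eval_mul, Polynomial.eval_X,
      Polynomial.eval_C]
  have hdet0 : P.det = 0 := by
    apply Polynomial.zero_of_eval_zero
    intro t
    have h1 := RingHom.map_det (Polynomial.evalRingHom t) P
    rw [heval t, h t] at h1
    simpa using h1
  -- expand along last column
  have hexp := Matrix.det_succ_column P (Fin.last r)
  have hPlast : ∀ i, P i (Fin.last r) = X * Polynomial.C (C i (Fin.last r)) := by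
    intro i; rw [hPapply, hAcol i]; simp
  -- det P = X * Q
  set Q : ℂ[X] := ∑ i : Fin (r+1),
      (-1) ^ ((i : ℕ) + (Fin.last r : ℕ)) * Polynomial.C (C i (Fin.last r)) *
        (P.submatrix i.succAbove (Fin.last r).succAbove).det with hQ
  have hdetP : P.det = X * Q := by
    rw [hexp, hQ, Finset.mul_sum]
    refine Finset.sum_congr rfl fun i _ => ?_
    rw [hPlast i]; ring
  have hQ0 : Q = 0 := by
    have h2 : X * Q = 0 := by rw [← hdetP, hdet0]
    rcases mul_eq_zero.mp h2 with h' | h'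
    · exact absurd h' Polynomial.X_ne_zero
    · exact h'
  -- evaluate Q at 0
  have hQeval : Polynomial.eval (0:ℂ) Q = 0 := by rw [hQ0]; simp
  rw [hQ, Polynomial.eval_finset_sum] at hQeval
  have hterm : ∀ i : Fin (r+1),
      Polynomial.eval (0:ℂ) ((-1) ^ ((i : ℕ) + (Fin.last r : ℕ)) * Polynomial.C (C i (Fin.last r)) *
        (P.submatrix i.succAbove (Fin.last r).succAbove).det)
      = (-1 : ℂ) ^ ((i : ℕ) + (Fin.last r : ℕ)) * C i (Fin.last r) *
        (A.submatrix i.succAbove (Fin.last r).succAbove).det := by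
    intro i
    have hmap : (Polynomial.evalRingHom (0:ℂ)).mapMatrix (P.submatrix i.succAbove (Fin.last r).succAbove)
        = A.submatrix i.succAbove (Fin.last r).succAbove := by
      ext a b
      simp only [RingHom.mapMatrix_apply, Matrix.map_apply, Matrix.submatrix_apply, hPapply,
        coe_evalRingHom]
      simp
    have hminor : Polynomial.eval (0:ℂ) (P.submatrix i.succAbove (Fin.last r).succAbove).det
        = (A.submatrix i.succAbove (Fin.last r).succAbove).det := by
      have h1 := RingHom.map_det (Polynomial.evalRingHom (0:ℂ)) (P.submatrix i.succAbove (Fin.last r).succAbove)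
      rw [hmap] at h1
      simpa using h1
    rw [Polynomial.eval_mul, Polynomial.eval_mul, hminor, Polynomial.eval_pow,
      Polynomial.eval_neg, Polynomial.eval_one, Polynomial.eval_C]
  rw [Finset.sum_congr rfl (fun i _ => hterm i)] at hQeval
  -- terms with i ≠ last vanish
  have hzero : ∀ i : Fin (r+1), i ≠ Fin.last r →
      (A.submatrix i.succAbove (Fin.last r).succAbove).det = 0 := by
    intro i hi
    obtain ⟨k, hk⟩ := Fin.exists_succAbove_eq (Ne.symm hi)
    apply Matrix.det_eq_zero_of_row_eq_zero k
    intro j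
    simp [Matrix.submatrix_apply, hk, hArow]
  rw [Finset.sum_eq_single (Fin.last r)] at hQeval
  · rw [Fin.succAbove_last] at hQeval
    have hsgn : ((-1 : ℂ)) ^ ((Fin.last r : ℕ) + (Fin.last r : ℕ)) = 1 := by
      rw [← two_mul]; simp [pow_mul]
    rw [hsgn, one_mul] at hQeval
    exact (mul_ne_zero hC hA) hQeval
  · intro i _ hi
    rw [hzero i hi, mul_zero]
  · intro h'; exact absurd (Finset.mem_univ _) h'

set_option maxHeartbeats 1000000 in
theorem stmt18 {R : Type*} [CommRing R] [Algebra ℂ R]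
    (𝒜 : ℕ → Submodule ℂ R) [GradedAlgebra 𝒜] (N : ℕ)
    (hvanish : ∀ s, N < s → 𝒜 s = ⊥)
    (hfin : ∀ s, Module.Finite ℂ (𝒜 s))
    (h0 : finrank ℂ (𝒜 0) = 1) (hsoc : finrank ℂ (𝒜 N) = 1)
    (hperf : ∀ a ≤ N, ∀ x ∈ 𝒜 a, x ≠ 0 → ∃ y ∈ 𝒜 (N - a), x * y ≠ 0)
    (e : ℕ) (he : 1 ≤ e) (h2e : 2 * e ≤ N)
    (hnoninj : ∀ η ∈ 𝒜 (N - 2 * e), ∃ α ∈ 𝒜 e, α ≠ 0 ∧ η * α = 0) :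
    (∀ η ∈ 𝒜 (N - 2 * e),
      (∀ η' ∈ 𝒜 (N - 2 * e),
        finrank ℂ (Submodule.map (LinearMap.mulLeft ℂ η') (𝒜 e))
          ≤ finrank ℂ (Submodule.map (LinearMap.mulLeft ℂ η) (𝒜 e))) →
      ∀ α ∈ 𝒜 e, η * α = 0 → α * α = 0) ∧
    (∃ α ∈ 𝒜 e, α ≠ 0 ∧ α * α = 0) := by
  classical
  haveI : Module.Finite ℂ ↥(𝒜 e) := hfin e
  haveI : Module.Finite ℂ ↥(𝒜 N) := hfin N
  -- the socle functional
  let b : Basis (Fin 1) ℂ ↥(𝒜 N) := finBasisOfFinrankEq ℂ _ hsoc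
  let ℓ : R →ₗ[ℂ] ℂ :=
    (b.coord 0) ∘ₗ (DirectSum.component ℂ ℕ (fun i => ↥(𝒜 i)) N) ∘ₗ
      (DirectSum.decomposeLinearEquiv 𝒜).toLinearMap
  have hℓmem : ∀ z (hz : z ∈ 𝒜 N), ℓ z = b.coord 0 ⟨z, hz⟩ := by
    intro z hz
    have h1 : (DirectSum.decompose 𝒜 z) N = ⟨z, hz⟩ :=
      Subtype.ext (DirectSum.decompose_of_mem_same 𝒜 hz)
    show b.coord 0 ((DirectSum.component ℂ ℕ (fun i => ↥(𝒜 i)) N)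
      ((DirectSum.decomposeLinearEquiv 𝒜) z)) = _
    rw [show ((DirectSum.component ℂ ℕ (fun i => ↥(𝒜 i)) N)
        ((DirectSum.decomposeLinearEquiv 𝒜) z)) = (DirectSum.decompose 𝒜 z) N from rfl, h1]
  have hℓne : ∀ z, z ∈ 𝒜 N → z ≠ 0 → ℓ z ≠ 0 := by
    intro z hz hz0
    rw [hℓmem z hz]
    intro hc
    have hb : (⟨z, hz⟩ : ↥(𝒜 N)) = 0 := by
      have hr := b.sum_repr ⟨z, hz⟩
      rw [Fin.sum_univ_one] at hr
      rw [show b.repr ⟨z, hz⟩ 0 = 0 from hc] at hr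
      simpa using hr.symm
    exact hz0 (by simpa using congrArg Subtype.val hb)
  -- membership helpers
  have hmem1 : ∀ {z x : R}, z ∈ 𝒜 (N - 2*e) → x ∈ 𝒜 e → z * x ∈ 𝒜 (N - e) := by
    intro z x hz hx
    have h1 := SetLike.mul_mem_graded hz hx
    rwa [show N - 2*e + e = N - e by omega] at h1
  have hmem2 : ∀ {z x y : R}, z ∈ 𝒜 (N - 2*e) → x ∈ 𝒜 e → y ∈ 𝒜 e → z * x * y ∈ 𝒜 N := by
    intro z x y hz hx hy
    have h1 := SetLike.mul_mem_graded (SetLike.mul_mem_graded hz hx) hy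
    rwa [show N - 2*e + e + e = N by omega] at h1
  -- multiplication maps
  let Mu : R → (↥(𝒜 e) →ₗ[ℂ] R) := fun z => (LinearMap.mulLeft ℂ z) ∘ₗ (𝒜 e).subtype
  have himg : ∀ z, Submodule.map (LinearMap.mulLeft ℂ z) (𝒜 e) = LinearMap.range (Mu z) := by
    intro z
    show _ = LinearMap.range ((LinearMap.mulLeft ℂ z) ∘ₗ (𝒜 e).subtype)
    rw [LinearMap.range_comp, Submodule.range_subtype]
  -- pairing into the dual
  let P : R →ₗ[ℂ] (↥(𝒜 e) →ₗ[ℂ] ℂ) :=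
    { toFun := fun z => ℓ ∘ₗ ((LinearMap.mulLeft ℂ z) ∘ₗ (𝒜 e).subtype)
      map_add' := by
        intro z w; ext y
        simp [add_mul]
      map_smul' := by
        intro c z; ext y
        simp [smul_mul_assoc] }
  have hPap : ∀ z (y : ↥(𝒜 e)), P z y = ℓ (z * ↑y) := fun _ _ => rfl
  have hrank_le : ∀ z, finrank ℂ ↥(LinearMap.range (P ∘ₗ Mu z))
      ≤ finrank ℂ ↥(Submodule.map (LinearMap.mulLeft ℂ z) (𝒜 e)) := by
    intro z
    rw [himg z, LinearMap.range_comp]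
    haveI : Module.Finite ℂ ↥(LinearMap.range (Mu z)) := Module.Finite.range (Mu z)
    exact Submodule.finrank_map_le P _
  -- Gram determinant vanishing from rank bound
  have gramdet : ∀ (η' : R), ∀ (m : ℕ) (x : Fin (m+1) → ↥(𝒜 e)),
      finrank ℂ ↥(LinearMap.range (P ∘ₗ Mu η')) ≤ m →
      Matrix.det (Matrix.of fun i j => ℓ (η' * ↑(x i) * ↑(x j))) = 0 := by
    intro η' m x hle
    have hdep : ¬ LinearIndependent ℂ (fun i => (P ∘ₗ Mu η') (x i)) := by
      intro hind
      have h1 : Submodule.span ℂ (Set.range fun i => (P ∘ₗ Mu η') (x i))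
          ≤ LinearMap.range (P ∘ₗ Mu η') := by
        rw [Submodule.span_le]
        rintro _ ⟨i, rfl⟩
        exact ⟨x i, rfl⟩
      haveI : Module.Finite ℂ ↥(LinearMap.range (P ∘ₗ Mu η')) :=
        Module.Finite.range (P ∘ₗ Mu η')
      have h2 := Submodule.finrank_mono h1
      rw [finrank_span_eq_card hind, Fintype.card_fin] at h2
      omega
    obtain ⟨g, hg, i0, hgi0⟩ := Fintype.not_linearIndependent_iff.mp hdep
    rw [← Matrix.exists_vecMul_eq_zero_iff]
    refine ⟨g, fun h0 => hgi0 (by rw [h0]; rfl), ?_⟩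
    funext j
    have h3 := congrArg (fun F : ↥(𝒜 e) →ₗ[ℂ] ℂ => F (x j)) hg
    simp only [LinearMap.coe_sum, Finset.sum_apply, LinearMap.smul_apply,
      LinearMap.zero_apply, smul_eq_mul] at h3
    show ∑ i, g i * (Matrix.of fun i j => ℓ (η' * ↑(x i) * ↑(x j))) i j = 0
    rw [← h3]
    refine Finset.sum_congr rfl fun i _ => ?_
    rfl
  -- Part 1
  have part1 : ∀ η ∈ 𝒜 (N - 2 * e),
      (∀ η' ∈ 𝒜 (N - 2 * e),
        finrank ℂ (Submodule.map (LinearMap.mulLeft ℂ η') (𝒜 e))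
          ≤ finrank ℂ (Submodule.map (LinearMap.mulLeft ℂ η) (𝒜 e))) →
      ∀ α ∈ 𝒜 e, η * α = 0 → α * α = 0 := by
    intro η hη hmax α hαmem hηα
    by_contra hαsq
    have hα0 : α ≠ 0 := by rintro rfl; exact hαsq (by simp)
    have hααmem : α * α ∈ 𝒜 (2*e) := by
      have h1 := SetLike.mul_mem_graded hαmem hαmem
      rwa [show e + e = 2*e by omega] at h1
    obtain ⟨γ, hγmem, hγne⟩ := hperf (2*e) h2e (α*α) hααmem hαsq
    rw [show N - 2*e = N - 2*e from rfl] at hγmem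
    set r := finrank ℂ ↥(Submodule.map (LinearMap.mulLeft ℂ η) (𝒜 e)) with hr
    set K := LinearMap.ker (Mu η) with hKdef
    have hαK : (⟨α, hαmem⟩ : ↥(𝒜 e)) ∈ K := by
      rw [hKdef, LinearMap.mem_ker]
      exact hηα
    obtain ⟨W, hWc⟩ := Submodule.exists_isCompl K
    have hdimW : finrank ℂ ↥W = r := by
      have h1 := Submodule.finrank_add_eq_of_isCompl hWc
      have h2 := LinearMap.finrank_range_add_finrank_ker (Mu η)
      rw [hKdef] at h1
      rw [hr, himg η]
      omega
    haveI : Module.Free ℂ ↥W := Module.Free.of_divisionRing ℂ ↥W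
    let w : Basis (Fin r) ℂ ↥W := finBasisOfFinrankEq ℂ _ hdimW
    let x : Fin (r+1) → ↥(𝒜 e) := Fin.snoc (fun i => ↑(w i)) ⟨α, hαmem⟩
    have hxlast : (↑(x (Fin.last r)) : R) = α := by simp [x]
    have hxcast : ∀ i : Fin r, (x (Fin.castSucc i)) = ↑(w i) := by
      intro i; simp [x]
    let Am : Matrix (Fin (r+1)) (Fin (r+1)) ℂ := Matrix.of fun i j => ℓ (η * ↑(x i) * ↑(x j))
    let Cm : Matrix (Fin (r+1)) (Fin (r+1)) ℂ := Matrix.of fun i j => ℓ (γ * ↑(x i) * ↑(x j))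
    refine matlem r Am Cm ?_ ?_ ?_ ?_ ?_
    · -- last row of Am is zero
      intro j
      show ℓ (η * ↑(x (Fin.last r)) * ↑(x j)) = 0
      rw [hxlast, hηα, zero_mul, map_zero]
    · -- last column of Am is zero
      intro i
      show ℓ (η * ↑(x i) * ↑(x (Fin.last r))) = 0
      rw [hxlast, mul_right_comm, hηα, zero_mul, map_zero]
    · -- principal minor nonzero
      intro hdet
      obtain ⟨v, hv0, hvM⟩ := Matrix.exists_vecMul_eq_zero_iff.mpr hdet
      set u : ↥(𝒜 e) := ∑ i, v i • (↑(w i) : ↥(𝒜 e)) with hu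
      have huW : u ∈ W := Submodule.sum_mem _ (fun i _ => Submodule.smul_mem _ _ (w i).2)
      have hwind : LinearIndependent ℂ (fun i => (↑(w i) : ↥(𝒜 e))) :=
        w.linearIndependent.map_injOn W.subtype W.injective_subtype.injOn
      have hu0 : u ≠ 0 := by
        intro h0
        exact hv0 (funext fun i => Fintype.linearIndependent_iff.mp hwind v (hu ▸ h0) i)
      -- ℓ (η * u * y) = 0 for all y
      have hucoe : (↑u : R) = ∑ i, v i • (↑(w i) : R) := by
        rw [hu]
        simp
      have hpair : ∀ j, ℓ (η * ↑u * ↑(x (Fin.castSucc j))) = 0 := by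
        intro j
        have h4 := congrFun hvM j
        simp only [Matrix.vecMul, dotProduct, Matrix.submatrix_apply, Pi.zero_apply] at h4
        rw [hucoe]
        rw [Finset.mul_sum]
        simp only [mul_smul_comm]
        rw [Finset.sum_mul]
        simp only [smul_mul_assoc]
        rw [map_sum]
        simp only [map_smul, smul_eq_mul]
        rw [← h4]
        refine Finset.sum_congr rfl fun i _ => ?_
        congr 1
        rw [show Am (Fin.castSucc i) (Fin.castSucc j)
            = ℓ (η * ↑(x (Fin.castSucc i)) * ↑(x (Fin.castSucc j))) from rfl, hxcast i]
      have hkerall : ∀ y : ↥(𝒜 e), ℓ (η * ↑u * ↑y) = 0 := by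
        have hKle : K ≤ LinearMap.ker ((P ∘ₗ Mu η) u) := by
          intro k hk
          rw [LinearMap.mem_ker]
          show ℓ ((η * ↑u) * ↑k) = 0
          rw [show (η * ↑u) * (↑k : R) = (η * ↑k) * ↑u by ring,
            show η * (↑k : R) = 0 from hk, zero_mul, map_zero]
        have hWle : W ≤ LinearMap.ker ((P ∘ₗ Mu η) u) := by
          have hWspan : W ≤ Submodule.span ℂ (Set.range fun i => (↑(w i) : ↥(𝒜 e))) := by
            intro y hy
            have h1 := b.sum_repr  -- dummy
            have h5 : (y : ↥(𝒜 e)) = ∑ i, w.repr ⟨y, hy⟩ i • (↑(w i) : ↥(𝒜 e)) := by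
              have h6 := w.sum_repr ⟨y, hy⟩
              have h7 := congrArg (Submodule.subtype W) h6
              simp only [map_sum, map_smul] at h7
              exact h7.symm
            rw [h5]
            exact Submodule.sum_mem _ fun i _ =>
              Submodule.smul_mem _ _ (Submodule.subset_span ⟨i, rfl⟩)
          refine le_trans hWspan ?_
          rw [Submodule.span_le]
          rintro _ ⟨j, rfl⟩
          rw [SetLike.mem_coe, LinearMap.mem_ker]
          show ℓ ((η * ↑u) * ↑(↑(w j) : ↥(𝒜 e))) = 0
          have := hpair j
          rw [hxcast j] at this
          exact this
        have htop : LinearMap.ker ((P ∘ₗ Mu η) u) = ⊤ := by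
          rw [eq_top_iff, ← hWc.sup_eq_top]
          exact sup_le hKle hWle
        intro y
        have h8 : y ∈ LinearMap.ker ((P ∘ₗ Mu η) u) := htop ▸ Submodule.mem_top
        exact h8
      have hηu : η * (↑u : R) = 0 := by
        by_contra hne
        have hmem : η * (↑u : R) ∈ 𝒜 (N - e) := hmem1 hη u.2
        obtain ⟨y, hymem, hy⟩ := hperf (N - e) (by omega) _ hmem hne
        rw [show N - (N - e) = e by omega] at hymem
        exact hℓne _ (hmem2 hη u.2 hymem) hy (hkerall ⟨y, hymem⟩)
      have huK : u ∈ K := by rw [hKdef, LinearMap.mem_ker]; exact hηu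
      have hubot : u ∈ (⊥ : Submodule ℂ ↥(𝒜 e)) := by
        rw [← hWc.inf_eq_bot]
        exact ⟨huK, huW⟩
      exact hu0 (Submodule.mem_bot _ |>.mp hubot)
    · -- Cm last last ≠ 0
      show ℓ (γ * ↑(x (Fin.last r)) * ↑(x (Fin.last r))) ≠ 0
      rw [hxlast]
      exact hℓne _ (hmem2 hγmem hαmem hαmem) (by rwa [show γ * α * α = α * α * γ by ring])
    · -- determinant vanishing for all t
      intro t
      have hmemt : η + t • γ ∈ 𝒜 (N - 2*e) :=
        Submodule.add_mem _ hη (Submodule.smul_mem _ t hγmem)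
      have hle : finrank ℂ ↥(LinearMap.range (P ∘ₗ Mu (η + t • γ))) ≤ r :=
        le_trans (hrank_le (η + t • γ)) (hmax _ hmemt)
      have h9 := gramdet (η + t • γ) r x hle
      rw [show Am + t • Cm = Matrix.of fun i j => ℓ ((η + t • γ) * ↑(x i) * ↑(x j)) from ?_]
      · exact h9
      · ext i j
        show ℓ (η * ↑(x i) * ↑(x j)) + t • ℓ (γ * ↑(x i) * ↑(x j))
            = ℓ ((η + t • γ) * ↑(x i) * ↑(x j))
        rw [show (η + t • γ) * (↑(x i) : R) * ↑(x j)
            = η * ↑(x i) * ↑(x j) + t • (γ * ↑(x i) * ↑(x j)) by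
          rw [add_mul, add_mul, smul_mul_assoc, smul_mul_assoc]]
        rw [map_add, map_smul]
  refine ⟨part1, ?_⟩
  -- Part 2: existence of a maximal-rank η
  have hbdd : ∀ η' : R, finrank ℂ ↥(Submodule.map (LinearMap.mulLeft ℂ η') (𝒜 e))
      ≤ finrank ℂ ↥(𝒜 e) := fun η' => Submodule.finrank_map_le _ _
  set S : Set ℕ := (fun η' : ↥(𝒜 (N - 2*e)) =>
    finrank ℂ ↥(Submodule.map (LinearMap.mulLeft ℂ (↑η' : R)) (𝒜 e))) '' Set.univ with hS
  have hSne : S.Nonempty := ⟨_, ⟨(0 : ↥(𝒜 (N - 2*e))), Set.mem_univ _, rfl⟩⟩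
  have hSbdd : BddAbove S := by
    refine ⟨finrank ℂ ↥(𝒜 e), ?_⟩
    rintro _ ⟨η', -, rfl⟩
    exact hbdd _
  obtain ⟨η₀, -, hη₀⟩ := Nat.sSup_mem hSne hSbdd
  have hmax0 : ∀ η' ∈ 𝒜 (N - 2 * e),
      finrank ℂ (Submodule.map (LinearMap.mulLeft ℂ η') (𝒜 e))
        ≤ finrank ℂ (Submodule.map (LinearMap.mulLeft ℂ (↑η₀ : R)) (𝒜 e)) := by
    intro η' hη'
    have hη₀' : finrank ℂ ↥(Submodule.map (LinearMap.mulLeft ℂ (↑η₀ : R)) (𝒜 e)) = sSup S := hη₀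
    rw [hη₀']
    exact le_csSup hSbdd ⟨⟨η', hη'⟩, Set.mem_univ _, rfl⟩
  obtain ⟨α, hαmem, hα0, hηα⟩ := hnoninj (↑η₀) η₀.2
  exact ⟨α, hαmem, hα0, part1 (↑η₀) η₀.2 hmax0 α hαmem hηα⟩
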